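/- Let t_Δ be the first time the optimal trajectory (under the feedback u*) from x with x₁ ≠ x₂ reaches the diagonal Δ. Then t_Δ ≤ (r(1-r)/d)·log(1 + d|x₁-x₂|/(M₋ r(1-r))), where M₋ = min(γ(x₂)/r, γ(x₁)/(1-r)); in particular t_Δ → 0 as d → ∞. -/

import Mathlib

open scoped Classical

open Set Filter in
/-- Comparison/Grönwall lemma: if `b < a` forces `a - b` to decay at rate
`-M - (d/(ρ(1-ρ)))(a-b)`, then `a` meets `b` by time `T`. -/
lemma aux17 (γ : ℝ → ℝ) (ρ d M T : ℝ) (a b : ℝ → ℝ)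
    (hρ0 : 0 < ρ) (hρ1 : ρ < 1) (hd : 0 < d) (hM : 0 < M)
    (hlt : b 0 < a 0)
    (hγM : ∀ σ, b 0 ≤ σ → M ≤ γ σ / ρ)
    (hca : ∀ t, 0 ≤ t → ContinuousAt a t) (hcb : ∀ t, 0 ≤ t → ContinuousAt b t)
    (hodea : ∀ t, 0 ≤ t → b t < a t →
      HasDerivAt a (-(1 / ρ) * γ (a t) + d / ρ * (b t - a t)) t)
    (hodeb : ∀ t, 0 ≤ t → b t < a t →
      HasDerivAt b (d / (1 - ρ) * (a t - b t)) t)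
    (hT : T = ρ * (1 - ρ) / d *
      Real.log (1 + d * (a 0 - b 0) / (M * ρ * (1 - ρ)))) :
    ∃ t, 0 ≤ t ∧ a t = b t ∧ t ≤ T := by
  have hρ1' : 0 < 1 - ρ := by linarith
  have hq : 0 < ρ * (1 - ρ) := mul_pos hρ0 hρ1'
  set c : ℝ := d / (ρ * (1 - ρ)) with hcdef
  have hc : 0 < c := div_pos hd hq
  set f : ℝ → ℝ := fun t => a t - b t with hfdef
  have hf0 : 0 < f 0 := sub_pos.2 hlt
  set R : ℝ := 1 + d * (a 0 - b 0) / (M * ρ * (1 - ρ)) with hRdef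
  have hR1 : 1 < R := by
    have : 0 < d * (a 0 - b 0) / (M * ρ * (1 - ρ)) :=
      div_pos (mul_pos hd hf0) (by positivity)
    simp only [hRdef]; linarith
  have hRpos : 0 < R := by linarith
  have hT0 : 0 ≤ T := by
    rw [hT]
    have := Real.log_nonneg hR1.le
    positivity
  have hcT : c * T = Real.log R := by
    rw [hT, hcdef]
    field_simp
  have hexpT : Real.exp (c * T) = R := by rw [hcT, Real.exp_log hRpos]
  by_contra hcon
  push_neg at hcon
  -- hcon : ∀ t, 0 ≤ t → a t = b t → T < t
  have hfpos : ∀ t ∈ Icc (0:ℝ) T, 0 < f t := by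
    intro t ht
    by_contra hle
    push_neg at hle
    have hcf : ContinuousOn f (Icc 0 t) := fun s hs =>
      ((hca s hs.1).sub (hcb s hs.1)).continuousWithinAt
    have h0mem : (0:ℝ) ∈ Icc (f t) (f 0) := ⟨hle, hf0.le⟩
    obtain ⟨s, hs, hfs⟩ := intermediate_value_Icc' ht.1 hcf h0mem
    have hab : a s = b s := by
      have : a s - b s = 0 := hfs
      linarith
    exact absurd (hcon s hs.1 hab) (not_lt.2 (hs.2.trans ht.2))
  have hab : ∀ t ∈ Icc (0:ℝ) T, b t < a t := fun t ht => sub_pos.1 (hfpos t ht)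
  -- b is monotone on [0, T]
  have hbmono : StrictMonoOn b (Icc 0 T) := by
    apply strictMonoOn_of_deriv_pos (convex_Icc 0 T)
    · exact fun s hs => (hcb s hs.1).continuousWithinAt
    · intro x hx
      rw [interior_Icc] at hx
      have hx' : x ∈ Icc (0:ℝ) T := ⟨hx.1.le, hx.2.le⟩
      rw [(hodeb x hx'.1 (hab x hx')).deriv]
      exact mul_pos (div_pos hd hρ1') (sub_pos.2 (hab x hx'))
  have hbge : ∀ t ∈ Icc (0:ℝ) T, b 0 ≤ b t := by
    intro t ht
    rcases eq_or_lt_of_le ht.1 with h | h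
    · rw [← h]
    · exact (hbmono ⟨le_refl 0, hT0⟩ ht h).le
  -- derivative of f and its bound
  have hder : ∀ t ∈ Icc (0:ℝ) T, HasDerivAt f
      ((-(1 / ρ) * γ (a t) + d / ρ * (b t - a t)) - d / (1 - ρ) * (a t - b t)) t :=
    fun t ht => (hodea t ht.1 (hab t ht)).sub (hodeb t ht.1 (hab t ht))
  have hderle : ∀ t ∈ Icc (0:ℝ) T,
      ((-(1 / ρ) * γ (a t) + d / ρ * (b t - a t)) - d / (1 - ρ) * (a t - b t))
        ≤ -M - c * f t := by
    intro t ht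
    have h1 : M ≤ γ (a t) / ρ := hγM (a t) ((hbge t ht).trans (hab t ht).le)
    have h2 : d / ρ * (b t - a t) - d / (1 - ρ) * (a t - b t) = -(c * f t) := by
      rw [hcdef, hfdef]
      field_simp
      ring
    have h3 : -(1 / ρ) * γ (a t) ≤ -M := by
      have : M * ρ ≤ γ (a t) := (le_div_iff₀ hρ0).1 h1
      have h4 : γ (a t) / ρ = (1 / ρ) * γ (a t) := by ring
      nlinarith [h1]
    nlinarith [h2, h3]
  -- Grönwall function
  set g : ℝ → ℝ := fun t => Real.exp (c * t) * f t + M / c * (Real.exp (c * t) - 1)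
    with hgdef
  have hexpder : ∀ t : ℝ, HasDerivAt (fun s => Real.exp (c * s))
      (Real.exp (c * t) * c) t := by
    intro t
    exact ((hasDerivAt_id t).const_mul c).exp.congr_deriv (by simp only [id_eq]; ring)
  have hgder : ∀ t ∈ Icc (0:ℝ) T, HasDerivAt g
      (Real.exp (c * t) *
        (((-(1 / ρ) * γ (a t) + d / ρ * (b t - a t)) - d / (1 - ρ) * (a t - b t))
          + c * f t + M)) t := by
    intro t ht
    have h1 := ((hexpder t).mul (hder t ht)).add
      (((hexpder t).sub_const 1).const_mul (M / c))
    refine h1.congr_deriv ?_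
    field_simp
    ring
  have hganti : AntitoneOn g (Icc 0 T) := by
    apply antitoneOn_of_deriv_nonpos (convex_Icc 0 T)
    · exact fun s hs => (hgder s hs).continuousAt.continuousWithinAt
    · intro x hx
      rw [interior_Icc] at hx
      exact ((hgder x ⟨hx.1.le, hx.2.le⟩).differentiableAt).differentiableWithinAt
    · intro x hx
      rw [interior_Icc] at hx
      have hx' : x ∈ Icc (0:ℝ) T := ⟨hx.1.le, hx.2.le⟩
      rw [(hgder x hx').deriv]
      apply mul_nonpos_of_nonneg_of_nonpos (Real.exp_pos _).le
      have := hderle x hx'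
      linarith
  have hgT : g T ≤ g 0 := hganti ⟨le_refl 0, hT0⟩ ⟨hT0, le_refl T⟩ hT0
  have hg0 : g 0 = f 0 := by simp [hgdef]
  have hgTval : g T = R * f T + M / c * (R - 1) := by
    simp only [hgdef, hexpT]
  have hMc : M / c * (R - 1) = f 0 := by
    have : R - 1 = d * (a 0 - b 0) / (M * ρ * (1 - ρ)) := by
      simp only [hRdef]; ring
    rw [this, hcdef, hfdef]
    field_simp
  have hfT : 0 < f T := hfpos T ⟨hT0, le_refl T⟩
  have h1 : R * f T ≤ 0 := by
    rw [hgTval, hMc] at hgT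
    rw [hg0] at hgT
    linarith
  have h2 : 0 < R * f T := mul_pos hRpos hfT
  linarith

/-- The first time t_Δ the optimal trajectory from x with x₁ ≠ x₂ reaches the diagonal
    satisfies t_Δ ≤ (r(1-r)/d) log(1 + d|x₁-x₂|/(M₋ r(1-r))), with
    M₋ = min(γ(x₂)/r, γ(x₁)/(1-r)); this bound tends to 0 as d → ∞. -/
theorem stmt17 (γ : ℝ → ℝ) (r d sb x₁ x₂ : ℝ)
    (hr : r ∈ Set.Ioo (0:ℝ) 1) (hd : 0 < d) (hsb : 0 < sb)
    (hx : x₁ ≠ x₂) (hx₁ : sb < x₁) (hx₂ : sb < x₂)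
    (hγpos : ∀ σ > (0:ℝ), 0 < γ σ)
    (hγmono : StrictMonoOn γ (Set.Ioi 0))
    (s₁ s₂ : ℝ → ℝ)
    (hinit : s₁ 0 = x₁ ∧ s₂ 0 = x₂)
    -- closed-loop dynamics under the optimal feedback u*
    (hode1 : ∀ t ≥ (0:ℝ), HasDerivAt s₁
      ((if s₂ t < s₁ t then -(1 / r) * γ (s₁ t)
        else if s₁ t < s₂ t then 0 else -γ (s₁ t)) + d / r * (s₂ t - s₁ t)) t)
    (hode2 : ∀ t ≥ (0:ℝ), HasDerivAt s₂
      ((if s₂ t < s₁ t then 0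
        else if s₁ t < s₂ t then -(1 / (1 - r)) * γ (s₂ t) else -γ (s₂ t)) +
       d / (1 - r) * (s₁ t - s₂ t)) t) :
    (∃ tΔ : ℝ, 0 ≤ tΔ ∧ s₁ tΔ = s₂ tΔ ∧
      tΔ ≤ r * (1 - r) / d *
        Real.log (1 + d * |x₁ - x₂| / (min (γ x₂ / r) (γ x₁ / (1 - r)) * r * (1 - r)))) ∧
    Filter.Tendsto (fun δ : ℝ => r * (1 - r) / δ *
        Real.log (1 + δ * |x₁ - x₂| / (min (γ x₂ / r) (γ x₁ / (1 - r)) * r * (1 - r))))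
      Filter.atTop (nhds 0) := by
  obtain ⟨hr0, hr1⟩ := hr
  have hr1' : 0 < 1 - r := by linarith
  have hx₁0 : 0 < x₁ := hsb.trans hx₁
  have hx₂0 : 0 < x₂ := hsb.trans hx₂
  set M : ℝ := min (γ x₂ / r) (γ x₁ / (1 - r)) with hMdef
  have hM : 0 < M :=
    lt_min (div_pos (hγpos x₂ hx₂0) hr0) (div_pos (hγpos x₁ hx₁0) hr1')
  have hxa : 0 < |x₁ - x₂| := abs_pos.2 (sub_ne_zero.2 hx)
  set T : ℝ := r * (1 - r) / d *
      Real.log (1 + d * |x₁ - x₂| / (M * r * (1 - r))) with hTdef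
  constructor
  · -- existence of tΔ
    rcases lt_or_gt_of_ne hx with h12 | h21
    · -- x₁ < x₂ : apply aux with a = s₂, b = s₁, ρ = 1 - r
      have habs : |x₁ - x₂| = x₂ - x₁ := by rw [abs_of_neg (by linarith)]; ring
      obtain ⟨t, ht0, htab, htT⟩ := aux17 γ (1 - r) d M T s₂ s₁
        hr1' (by linarith) hd hM
        (by rw [hinit.1, hinit.2]; exact h12)
        (by
          intro σ hσ
          rw [hinit.1] at hσ
          refine (min_le_right _ _).trans ?_
          rw [div_le_div_iff_of_pos_right hr1']
          rcases eq_or_lt_of_le hσ with h | h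
          · rw [h]
          · exact (hγmono hx₁0 (hx₁0.trans h) h).le)
        (fun t ht => (hode2 t ht).continuousAt)
        (fun t ht => (hode1 t ht).continuousAt)
        (by
          intro t ht hba
          have h := hode2 t ht
          rw [if_neg (lt_asymm hba), if_pos hba] at h
          exact h)
        (by
          intro t ht hba
          have h := hode1 t ht
          rw [if_neg (lt_asymm hba), if_pos hba, zero_add] at h
          convert h using 1
          have : (1 : ℝ) - (1 - r) = r := by ring
          rw [this])
        (by
          rw [hinit.1, hinit.2]
          have harg : (1 : ℝ) + d * (x₂ - x₁) / (M * (1 - r) * (1 - (1 - r)))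
              = 1 + d * |x₁ - x₂| / (M * r * (1 - r)) := by
            rw [habs]
            ring_nf
          rw [harg, hTdef]
          ring)
      exact ⟨t, ht0, htab.symm, htT⟩
    · -- x₂ < x₁ : apply aux with a = s₁, b = s₂, ρ = r
      have habs : |x₁ - x₂| = x₁ - x₂ := abs_of_pos (by linarith)
      obtain ⟨t, ht0, htab, htT⟩ := aux17 γ r d M T s₁ s₂
        hr0 hr1 hd hM
        (by rw [hinit.1, hinit.2]; exact h21)
        (by
          intro σ hσ
          rw [hinit.2] at hσ
          refine (min_le_left _ _).trans ?_
          rw [div_le_div_iff_of_pos_right hr0]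
          rcases eq_or_lt_of_le hσ with h | h
          · rw [h]
          · exact (hγmono hx₂0 (hx₂0.trans h) h).le)
        (fun t ht => (hode1 t ht).continuousAt)
        (fun t ht => (hode2 t ht).continuousAt)
        (by
          intro t ht hba
          have h := hode1 t ht
          rw [if_pos hba] at h
          exact h)
        (by
          intro t ht hba
          have h := hode2 t ht
          rw [if_pos hba, zero_add] at h
          exact h)
        (by
          rw [hinit.1, hinit.2, ← habs, hTdef])
      exact ⟨t, ht0, htab, htT⟩
  · -- the bound tends to 0 as d → ∞
    have hC : 0 < M * r * (1 - r) := by positivity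
    set A : ℝ := |x₁ - x₂| / (M * r * (1 - r)) with hAdef
    have hA : 0 < A := div_pos hxa hC
    have h1 : Filter.Tendsto (fun y : ℝ => Real.log y / y) Filter.atTop (nhds 0) :=
      Real.isLittleO_log_id_atTop.tendsto_div_nhds_zero
    have h2 : Filter.Tendsto (fun δ : ℝ => 1 + δ * A) Filter.atTop Filter.atTop :=
      Filter.tendsto_atTop_add_const_left _ 1
        (Filter.Tendsto.atTop_mul_const hA Filter.tendsto_id)
    have h3 : Filter.Tendsto (fun δ : ℝ => Real.log (1 + δ * A) / (1 + δ * A))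
        Filter.atTop (nhds 0) := h1.comp h2
    have h4 : Filter.Tendsto (fun δ : ℝ => (1 + δ * A) / δ) Filter.atTop (nhds A) := by
      have h5 : Filter.Tendsto (fun δ : ℝ => δ⁻¹ + A) Filter.atTop (nhds (0 + A)) :=
        tendsto_inv_atTop_zero.add tendsto_const_nhds
      rw [zero_add] at h5
      apply h5.congr'
      filter_upwards [Filter.eventually_gt_atTop (0:ℝ)] with δ hδ
      field_simp
    have h6 : Filter.Tendsto
        (fun δ : ℝ => r * (1 - r) *
          (Real.log (1 + δ * A) / (1 + δ * A) * ((1 + δ * A) / δ)))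
        Filter.atTop (nhds (r * (1 - r) * (0 * A))) :=
      (h3.mul h4).const_mul _
    rw [zero_mul, mul_zero] at h6
    apply h6.congr'
    filter_upwards [Filter.eventually_gt_atTop (0:ℝ)] with δ hδ
    have hδA : (0:ℝ) < 1 + δ * A := by nlinarith
    have harg : 1 + δ * |x₁ - x₂| / (M * r * (1 - r)) = 1 + δ * A := by
      rw [hAdef]; ring
    rw [harg]
    field_simp
    try ring
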